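/- For all natural numbers E ≥ 2 and n ≥ 2, ∑_{k=2}^{E−1} C(n+E−1−k, E−1) · ( ∑_{i=0}^{k−2} (−1)^i · C(E, i) · γ(k−i, E−i) ) = (E−2)·C(n+E−2, E−1) − C(n+E−2, E−2) + 1, as an identity of integers. -/

import Mathlib

/-- `γ(m, F) = F·C(F−1, m−1) − C(F+1, m) + 1`, the first Betti number of the
`m`-particle combinatorial configuration space of the non-subdivided star graph
with `F` edges. -/
def gammaStar (m F : ℕ) : ℤ :=
  (F : ℤ) * ((F - 1).choose (m - 1)) - ((F + 1).choose m) + 1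

open Finset
/-- Partial alternating sum of binomial coefficients. -/
lemma altP (e : ℕ) : ∀ m : ℕ, ∑ i ∈ range (m + 1), (-1 : ℤ) ^ i * ((e + 1).choose i)
    = (-1) ^ m * (e.choose m) := by
  intro m
  induction m with
  | zero => simp
  | succ m ih =>
    rw [Finset.sum_range_succ, ih, Nat.choose_succ_succ (e) (m)]
    push_cast
    ring

/-- Partial alternating "subset-of-subset" sum. -/
lemma altQ (e j m : ℕ) (hm : m ≤ j) (hj : j ≤ e) :
    ∑ i ∈ range (m + 1), (-1 : ℤ) ^ i * (e.choose i) * ((e - i).choose (j - i))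
      = (e.choose j) * ((-1) ^ m * ((j - 1).choose m)) := by
  have h1 : ∑ i ∈ range (m + 1), (-1 : ℤ) ^ i * (e.choose i) * ((e - i).choose (j - i))
      = ∑ i ∈ range (m + 1), (-1 : ℤ) ^ i * ((e.choose j) * (j.choose i)) := by
    refine Finset.sum_congr rfl fun i hi => ?_
    have hij : i ≤ j := le_trans (Nat.lt_succ_iff.mp (Finset.mem_range.mp hi)) hm
    have := Nat.choose_mul (n := e) hij
    rw [mul_assoc]
    congr 1
    exact_mod_cast (congrArg (Nat.cast : ℕ → ℤ) this).symm
  rw [h1]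
  rcases Nat.eq_zero_or_pos j with hj0 | hj0
  · subst hj0
    interval_cases m
    simp
  · obtain ⟨j', rfl⟩ : ∃ j', j = j' + 1 := ⟨j - 1, by omega⟩
    have : ∀ i : ℕ, (-1:ℤ)^i * ((e.choose (j'+1):ℤ) * ((j'+1).choose i))
        = (e.choose (j'+1):ℤ) * ((-1)^i * ((j'+1).choose i)) := fun i => by ring
    simp only [this]
    rw [← Finset.mul_sum, altP j' m]
    simp

lemma alt_pascal (r : ℕ) (f : ℕ → ℤ) :
    ∑ k ∈ range (r + 2), (-1 : ℤ) ^ k * ((r + 1).choose k) * f k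
      = ∑ k ∈ range (r + 1), (-1 : ℤ) ^ k * (r.choose k) * (f k - f (k + 1)) := by
  have hB : ∑ x ∈ range (r + 1), (-1 : ℤ) ^ (x + 1) * (r.choose (x + 1)) * f (x + 1)
      = ∑ x ∈ range r, (-1 : ℤ) ^ (x + 1) * (r.choose (x + 1)) * f (x + 1) := by
    rw [Finset.sum_range_succ]
    simp [Nat.choose_succ_self]
  have hA : ∑ x ∈ range (r + 1), (-1 : ℤ) ^ (x + 1) * (r.choose x) * f (x + 1)
      = (∑ x ∈ range r, (-1 : ℤ) ^ (x + 2) * (r.choose (x + 1)) * f (x + 2)) + (-1) * f 1 := by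
    rw [Finset.sum_range_succ' (fun x => (-1 : ℤ) ^ (x + 1) * (r.choose x) * f (x + 1)) r]
    simp
  have L : ∑ k ∈ range (r + 2), (-1 : ℤ) ^ k * ((r + 1).choose k) * f k
      = (∑ x ∈ range (r + 1), ((-1 : ℤ) ^ (x + 1) * (r.choose x) * f (x + 1)
          + (-1 : ℤ) ^ (x + 1) * (r.choose (x + 1)) * f (x + 1))) + f 0 := by
    rw [Finset.sum_range_succ' (fun k => (-1 : ℤ) ^ k * ((r + 1).choose k) * f k) (r + 1)]
    congr 1
    · refine Finset.sum_congr rfl fun x _ => ?_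
      rw [Nat.choose_succ_succ (r) (x)]
      push_cast
      ring
    · simp
  have R : ∑ k ∈ range (r + 1), (-1 : ℤ) ^ k * (r.choose k) * (f k - f (k + 1))
      = (∑ x ∈ range r, ((-1 : ℤ) ^ (x + 1) * (r.choose (x + 1)) * f (x + 1)
          + (-1 : ℤ) ^ (x + 2) * (r.choose (x + 1)) * f (x + 2))) + (f 0 - f 1) := by
    rw [Finset.sum_range_succ' (fun k => (-1 : ℤ) ^ k * (r.choose k) * (f k - f (k + 1))) r]
    congr 1
    · refine Finset.sum_congr rfl fun x _ => ?_
      push_cast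
      ring
    · simp
  rw [L, R, Finset.sum_add_distrib, hA, hB, Finset.sum_add_distrib]
  ring

lemma altR (r j x : ℕ) :
    ∑ k ∈ range (r + 1), (-1 : ℤ) ^ k * (r.choose k) * ((x + r - k).choose (j + r))
      = x.choose j := by
  induction r with
  | zero => simp
  | succ r ih =>
    rw [show r + 1 + 1 = r + 2 from rfl, alt_pascal r]
    rw [← ih]
    refine Finset.sum_congr rfl fun k hk => ?_
    have hk' : k ≤ r := Nat.lt_succ_iff.mp (Finset.mem_range.mp hk)
    have h1 : x + (r + 1) - k = (x + r - k) + 1 := by omega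
    have h2 : x + (r + 1) - (k + 1) = x + r - k := by omega
    have h3 : (x + r - k + 1).choose (j + (r+1)) = (x + r - k).choose (j + r) + (x + r - k).choose (j + r + 1) := by
      rw [show j + (r+1) = (j + r) + 1 from rfl]
      exact Nat.choose_succ_succ _ _
    rw [h1, h2, h3]
    push_cast
    ring

lemma innerA (m d : ℕ) :
    ∑ i ∈ range (m + 1), (-1 : ℤ) ^ i * ((m + 3 + d).choose i)
        * gammaStar (m + 2 - i) (m + 3 + d - i)
      = (-1) ^ m * ((m + 2 + d).choose (m + 2)) := by
  have hterm : ∀ i ∈ range (m + 1),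
      (-1 : ℤ) ^ i * ((m + 3 + d).choose i) * gammaStar (m + 2 - i) (m + 3 + d - i)
      = ((m + 3 + d : ℕ) : ℤ) * ((-1) ^ i * ((m + 2 + d).choose i) * ((m + 2 + d - i).choose (m + 1 - i)))
        - ((-1) ^ i * ((m + 3 + d).choose i) * ((m + 3 + d - i).choose (m + 2 - i)))
        - ((-1) ^ i * ((m + 3 + d).choose i) * ((m + 3 + d - i).choose (m + 1 - i)))
        + ((-1) ^ i * ((m + 3 + d).choose i)) := by
    intro i hi
    have him : i ≤ m := Nat.lt_succ_iff.mp (Finset.mem_range.mp hi)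
    unfold gammaStar
    have e1 : m + 3 + d - i - 1 = m + 2 + d - i := by omega
    have e2 : m + 2 - i - 1 = m + 1 - i := by omega
    rw [e1, e2]
    have key1 : (m + 3 + d - i) * ((m + 3 + d).choose i) = (m + 3 + d) * ((m + 2 + d).choose i) := by
      have h := Nat.choose_mul_succ_eq (m + 2 + d) i
      rw [show m + 2 + d + 1 = m + 3 + d by omega] at h
      calc (m + 3 + d - i) * ((m + 3 + d).choose i)
          = (m + 3 + d).choose i * (m + 3 + d - i) := by ring
        _ = (m + 2 + d).choose i * (m + 3 + d) := h.symm
        _ = (m + 3 + d) * ((m + 2 + d).choose i) := by ring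
    have p1 : ((m + 3 + d - i : ℕ) : ℤ) * ((m + 3 + d).choose i)
        = ((m + 3 + d : ℕ) : ℤ) * ((m + 2 + d).choose i) := by exact_mod_cast key1
    have key2 : (m + 3 + d - i + 1).choose (m + 2 - i)
        = (m + 3 + d - i).choose (m + 1 - i) + (m + 3 + d - i).choose (m + 2 - i) := by
      rw [show m + 2 - i = (m + 1 - i) + 1 by omega]
      exact Nat.choose_succ_succ _ _
    have p2 : ((m + 3 + d - i + 1).choose (m + 2 - i) : ℤ)
        = ((m + 3 + d - i).choose (m + 1 - i) : ℤ) + ((m + 3 + d - i).choose (m + 2 - i) : ℤ) := by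
      exact_mod_cast key2
    linear_combination ((-1 : ℤ) ^ i * ((m + 2 + d - i).choose (m + 1 - i))) * p1
      - ((-1 : ℤ) ^ i * ((m + 3 + d).choose i)) * p2
  rw [Finset.sum_congr rfl hterm]
  have split : ∑ i ∈ range (m + 1),
      (((m + 3 + d : ℕ) : ℤ) * ((-1 : ℤ) ^ i * (((m + 2 + d).choose i : ℕ) : ℤ) * (((m + 2 + d - i).choose (m + 1 - i) : ℕ) : ℤ))
        - ((-1 : ℤ) ^ i * (((m + 3 + d).choose i : ℕ) : ℤ) * (((m + 3 + d - i).choose (m + 2 - i) : ℕ) : ℤ))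
        - ((-1 : ℤ) ^ i * (((m + 3 + d).choose i : ℕ) : ℤ) * (((m + 3 + d - i).choose (m + 1 - i) : ℕ) : ℤ))
        + ((-1 : ℤ) ^ i * (((m + 3 + d).choose i : ℕ) : ℤ)))
      = ((m + 3 + d : ℕ) : ℤ) * (∑ i ∈ range (m + 1), (-1 : ℤ) ^ i * (((m + 2 + d).choose i : ℕ) : ℤ) * (((m + 2 + d - i).choose (m + 1 - i) : ℕ) : ℤ))
        - (∑ i ∈ range (m + 1), (-1 : ℤ) ^ i * (((m + 3 + d).choose i : ℕ) : ℤ) * (((m + 3 + d - i).choose (m + 2 - i) : ℕ) : ℤ))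
        - (∑ i ∈ range (m + 1), (-1 : ℤ) ^ i * (((m + 3 + d).choose i : ℕ) : ℤ) * (((m + 3 + d - i).choose (m + 1 - i) : ℕ) : ℤ))
        + (∑ i ∈ range (m + 1), (-1 : ℤ) ^ i * (((m + 3 + d).choose i : ℕ) : ℤ)) := by
    rw [Finset.sum_add_distrib, Finset.sum_sub_distrib, Finset.sum_sub_distrib, Finset.mul_sum]
  rw [split]
  have hQ1 := altQ (m + 2 + d) (m + 1) m (by omega) (by omega)
  have hQ2 := altQ (m + 3 + d) (m + 2) m (by omega) (by omega)
  have hQ3 := altQ (m + 3 + d) (m + 1) m (by omega) (by omega)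
  have hP := altP (m + 2 + d) m
  rw [show m + 2 + d + 1 = m + 3 + d by omega] at hP
  rw [hQ1, hQ2, hQ3, hP]
  have q1 : ((m + 2) : ℤ) * (((m + 3 + d).choose (m + 2) : ℕ) : ℤ)
      = ((m + 3 + d : ℕ) : ℤ) * (((m + 2 + d).choose (m + 1) : ℕ) : ℤ) := by
    have h := Nat.add_one_mul_choose_eq (m + 2 + d) (m + 1)
    have h' : (m + 2) * ((m + 3 + d).choose (m + 2)) = (m + 3 + d) * ((m + 2 + d).choose (m + 1)) := by
      rw [mul_comm]
      simpa [Nat.succ_eq_add_one, show m + 2 + d + 1 = m + 3 + d by omega,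
        show m + 1 + 1 = m + 2 by omega] using h.symm
    exact_mod_cast h'
  have q2 : (((m + 3 + d).choose (m + 2) : ℕ) : ℤ)
      = ((m + 2 + d).choose (m + 1) : ℤ) + ((m + 2 + d).choose (m + 2) : ℤ) := by
    have := Nat.choose_succ_succ (m + 2 + d) (m + 1)
    rw [show (m + 2 + d).succ = m + 3 + d by omega, show (m + 1).succ = m + 2 by omega] at this
    exact_mod_cast this
  have q3 : (((m + 3 + d).choose (m + 1) : ℕ) : ℤ)
      = ((m + 2 + d).choose m : ℤ) + ((m + 2 + d).choose (m + 1) : ℤ) := by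
    have := Nat.choose_succ_succ (m + 2 + d) m
    rw [show (m + 2 + d).succ = m + 3 + d by omega, show m.succ = m + 1 by omega] at this
    exact_mod_cast this
  have c1 : ((m.choose m : ℕ) : ℤ) = 1 := by simp
  have c2 : (((m + 1).choose m : ℕ) : ℤ) = (m : ℤ) + 1 := by
    rw [Nat.choose_succ_self_right]; push_cast; ring
  have c3 : (((m + 2 - 1).choose m : ℕ) : ℤ) = (m : ℤ) + 1 := by
    rw [show m + 2 - 1 = m + 1 by omega, Nat.choose_succ_self_right]; push_cast; ring
  have c4 : (((m + 1 - 1).choose m : ℕ) : ℤ) = 1 := by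
    rw [show m + 1 - 1 = m by omega]; simp
  rw [c3, c4]
  linear_combination (-(-1 : ℤ) ^ m) * q1 + ((-1 : ℤ) ^ m) * q2 - ((-1 : ℤ) ^ m) * q3

/-- The paper's expression `β_n^E = ∑_{k=2}^{E−1} C(n−k+E−1, E−1)·α_k^E`, with
`α_k^E = ∑_{i=0}^{k−2} (−1)^i C(E,i) γ_{k−i}^{E−i}`, equals its closed form
`(E−2)·C(n+E−2, E−1) − C(n+E−2, E−2) + 1`. -/
theorem star_beta_eval (E n : ℕ) (hE : 2 ≤ E) (hn : 2 ≤ n) :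
    ∑ k ∈ Finset.Icc 2 (E - 1),
        ((n + E - 1 - k).choose (E - 1) : ℤ) *
          (∑ i ∈ Finset.range (k - 1),
            (-1 : ℤ) ^ i * (E.choose i) * gammaStar (k - i) (E - i))
      = ((E : ℤ) - 2) * ((n + E - 2).choose (E - 1)) - ((n + E - 2).choose (E - 2)) + 1 := by
  obtain ⟨b, rfl⟩ : ∃ b, E = b + 2 := ⟨E - 2, by omega⟩
  have hIcc : Finset.Icc 2 (b + 2 - 1) = Finset.Ico 2 (b + 2) := by
    rw [show b + 2 - 1 = b + 1 from rfl, ← Finset.Ico_add_one_right_eq_Icc]; rfl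
  have hinner : ∀ k ∈ Finset.Ico 2 (b + 2),
      ((n + (b + 2) - 1 - k).choose (b + 2 - 1) : ℤ) *
          (∑ i ∈ Finset.range (k - 1),
            (-1 : ℤ) ^ i * ((b + 2).choose i) * gammaStar (k - i) (b + 2 - i))
      = (-1 : ℤ) ^ k * ((b + 1).choose k) * ((n + (b + 1) - k).choose (0 + (b + 1)) : ℤ) := by
    intro k hk
    obtain ⟨hk2, hkE⟩ := Finset.mem_Ico.mp hk
    obtain ⟨m, rfl⟩ : ∃ m, k = m + 2 := ⟨k - 2, by omega⟩
    obtain ⟨d, rfl⟩ : ∃ d, b = m + 1 + d := ⟨b - m - 1, by omega⟩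
    have hsum : ∑ i ∈ Finset.range (m + 2 - 1),
        (-1 : ℤ) ^ i * ((m + 1 + d + 2).choose i) * gammaStar (m + 2 - i) (m + 1 + d + 2 - i)
        = (-1 : ℤ) ^ m * ((m + 2 + d).choose (m + 2)) := by
      rw [show m + 2 - 1 = m + 1 from rfl]
      have h := innerA m d
      rw [show m + 3 + d = m + 1 + d + 2 by omega] at h
      exact h
    rw [hsum]
    rw [show n + (m + 1 + d + 2) - 1 - (m + 2) = n + d by omega,
      show m + 1 + d + 2 - 1 = m + 2 + d by omega,
      show n + (m + 1 + d + 1) - (m + 2) = n + d by omega,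
      show 0 + (m + 1 + d + 1) = m + 2 + d by omega,
      show m + 1 + d + 1 = m + 2 + d by omega]
    ring
  rw [hIcc, Finset.sum_congr rfl hinner]
  have hfull := altR (b + 1) 0 n
  rw [Finset.range_eq_Ico, ← Finset.sum_Ico_consecutive _ (by omega : 0 ≤ 2) (by omega : 2 ≤ b + 2)] at hfull
  have h01 : ∑ k ∈ Finset.Ico 0 2, (-1 : ℤ) ^ k * ((b + 1).choose k) * ((n + (b + 1) - k).choose (0 + (b + 1)) : ℤ)
      = ((n + b + 1).choose (b + 1) : ℤ) - ((b : ℤ) + 1) * ((n + b).choose (b + 1) : ℤ) := by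
    rw [← Finset.range_eq_Ico]
    rw [Finset.sum_range_succ, Finset.sum_range_succ, Finset.sum_range_zero]
    rw [show n + (b + 1) - 0 = n + b + 1 by omega, show n + (b + 1) - 1 = n + b by omega,
      show 0 + (b + 1) = b + 1 by omega]
    simp
    push_cast
    ring
  rw [h01] at hfull
  have pas : ((n + b + 1).choose (b + 1) : ℤ) = ((n + b).choose b : ℤ) + ((n + b).choose (b + 1) : ℤ) := by
    exact_mod_cast Nat.choose_succ_succ (n + b) b
  rw [show n + (b + 2) - 2 = n + b by omega, show b + 2 - 1 = b + 1 from rfl,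
    show b + 2 - 2 = b from rfl]
  simp only [Nat.choose_zero_right, Nat.cast_one] at hfull
  push_cast
  push_cast at hfull pas
  linear_combination hfull - pas
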